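/- In the Q_hol-cohomology of the N=4 supersymmetry algebra: among fermionic elements, the cohomology of [Q_hol,−] on S₊ ⊗ W is the 3-dimensional space spanned by α₂⊗e₂, α₂⊗f₁, α₂⊗f₂ (all elements of S₊⊗W are closed, and the exact elements form the 5-dimensional span of S₊⊗⟨e₁⟩ and ⟨α₁⟩⊗W), while on S₋ ⊗ W* no elements are exact and the closed elements are S₋ ⊗ ⟨e₂*, f₁*, f₂*⟩. -/

import Mathlib

open Matrix

/-- The bracket on the odd part `Π(S₊⊗W ⊕ S₋⊗W*)` of the complexified `N=4` supersymmetry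
algebra, valued in `V_ℂ ≅ S₊ ⊗ S₋`, in matrix form (see STATEMENT 5): the bracket of `(a,b)`
and `(a',b')` is `a ⬝ b'ᵀ + a' ⬝ bᵀ`. -/
noncomputable def n4Bracket :
    (Matrix (Fin 2) (Fin 4) ℂ × Matrix (Fin 2) (Fin 4) ℂ) →ₗ[ℂ]
      (Matrix (Fin 2) (Fin 4) ℂ × Matrix (Fin 2) (Fin 4) ℂ) →ₗ[ℂ]
        Matrix (Fin 2) (Fin 2) ℂ :=
  LinearMap.mk₂ ℂ (fun x y => x.1 * y.2ᵀ + y.1 * x.2ᵀ)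
    (by intro x x' y
        simp [Matrix.add_mul, Matrix.mul_add, Matrix.transpose_add]
        abel)
    (by intro c x y
        simp [Matrix.smul_mul, Matrix.mul_smul, Matrix.transpose_smul, smul_add])
    (by intro x y y'
        simp [Matrix.add_mul, Matrix.mul_add, Matrix.transpose_add]
        abel)
    (by intro c x y
        simp [Matrix.smul_mul, Matrix.mul_smul, Matrix.transpose_smul, smul_add])

/-- `Q_hol = α₁ ⊗ e₁`, as the matrix unit `E₀₀ ∈ S₊ ⊗ W`. -/
noncomputable def qhol : Matrix (Fin 2) (Fin 4) ℂ :=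
  Matrix.single (0 : Fin 2) (0 : Fin 4) (1 : ℂ)

private noncomputable def kSub : Submodule ℂ (Matrix (Fin 2) (Fin 4) ℂ) where
  carrier := {M | M 1 1 = 0 ∧ M 1 2 = 0 ∧ M 1 3 = 0}
  add_mem' := by intro a b ha hb; simp_all [Matrix.add_apply]
  zero_mem' := by simp
  smul_mem' := by intro c a ha; simp_all [Matrix.smul_apply]

private lemma span_char (M : Matrix (Fin 2) (Fin 4) ℂ) :
    M ∈ Submodule.span ℂ
        ({Matrix.single 0 0 1, Matrix.single 1 0 1,
          Matrix.single 0 1 1, Matrix.single 0 2 1,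
          Matrix.single 0 3 1} : Set (Matrix (Fin 2) (Fin 4) ℂ)) ↔
      M 1 1 = 0 ∧ M 1 2 = 0 ∧ M 1 3 = 0 := by
  constructor
  · intro h
    have : M ∈ kSub := by
      refine Submodule.span_le.mpr ?_ h
      intro x hx
      simp only [Set.mem_insert_iff, Set.mem_singleton_iff] at hx
      rcases hx with rfl | rfl | rfl | rfl | rfl <;>
        simp [kSub, Matrix.single]
    exact this
  · rintro ⟨h1, h2, h3⟩
    have hM : M = M 0 0 • Matrix.single 0 0 1 + M 1 0 • Matrix.single 1 0 1
        + M 0 1 • Matrix.single 0 1 1 + M 0 2 • Matrix.single 0 2 1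
        + M 0 3 • Matrix.single 0 3 1 := by
      ext i j
      fin_cases i <;> fin_cases j <;>
        simp_all [Matrix.add_apply, Matrix.smul_apply, Matrix.single]
    rw [hM]
    refine Submodule.add_mem _ (Submodule.add_mem _ (Submodule.add_mem _ (Submodule.add_mem _
      (Submodule.smul_mem _ _ ?_) (Submodule.smul_mem _ _ ?_)) (Submodule.smul_mem _ _ ?_))
      (Submodule.smul_mem _ _ ?_)) (Submodule.smul_mem _ _ ?_) <;>
      apply Submodule.subset_span <;> simp

/-- In the `Q_hol`-cohomology of the `N=4` supersymmetry algebra, among fermionic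
elements:
(1) every element of `S₊ ⊗ W` is `[Q_hol,−]`-closed;
(2) the exact elements (the image of the bosonic part `so(4;ℂ) ⊕ sl(4;ℂ)` acting on `Q_hol`,
    where `(X₊, X₋) ∈ so(4;ℂ) ≅ sl(2)⊕sl(2)` acts by left multiplication on the `S₊` resp. `S₋`
    index and `r ∈ sl(4;ℂ)` acts on the `W` index by `rᵀ` and on `W*` by `−r`) form exactly the
    5-dimensional span of `S₊ ⊗ ⟨e₁⟩` and `⟨α₁⟩ ⊗ W` — so the cohomology on `S₊⊗W` is the
    3-dimensional space spanned by `α₂⊗e₂, α₂⊗f₁, α₂⊗f₂`;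
(3) on `S₋ ⊗ W*` no elements are exact (the second component of the action on `Q_hol` is zero),
    and the closed elements are exactly `S₋ ⊗ ⟨e₂*, f₁*, f₂*⟩`. -/
theorem qhol_cohomology_fermions :
    (∀ A : Matrix (Fin 2) (Fin 4) ℂ, n4Bracket (qhol, 0) (A, 0) = 0) ∧
    ({ v : Matrix (Fin 2) (Fin 4) ℂ × Matrix (Fin 2) (Fin 4) ℂ |
        ∃ (Xp Xm : Matrix (Fin 2) (Fin 2) ℂ) (r : Matrix (Fin 4) (Fin 4) ℂ),
          Xp.trace = 0 ∧ Xm.trace = 0 ∧ r.trace = 0 ∧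
            v = (Xp * qhol + qhol * rᵀ, Xm * (0 : Matrix (Fin 2) (Fin 4) ℂ) - (0 : Matrix (Fin 2) (Fin 4) ℂ) * r) } =
      { v : Matrix (Fin 2) (Fin 4) ℂ × Matrix (Fin 2) (Fin 4) ℂ |
          v.1 ∈ Submodule.span ℂ
              ({Matrix.single 0 0 1, Matrix.single 1 0 1,
                Matrix.single 0 1 1, Matrix.single 0 2 1,
                Matrix.single 0 3 1} : Set (Matrix (Fin 2) (Fin 4) ℂ)) ∧
            v.2 = 0 }) ∧
    (∀ b : Matrix (Fin 2) (Fin 4) ℂ,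
      n4Bracket (qhol, 0) (0, b) = 0 ↔ ∀ c : Fin 2, b c 0 = 0) := by
  refine ⟨?_, ?_, ?_⟩
  · intro A
    simp [n4Bracket]
  · ext v
    simp only [Set.mem_setOf_eq]
    constructor
    · rintro ⟨Xp, Xm, r, hXp, hXm, hr, rfl⟩
      refine ⟨?_, by simp⟩
      rw [span_char]
      refine ⟨?_, ?_, ?_⟩ <;>
        simp [qhol, Matrix.mul_apply, Matrix.add_apply, Matrix.single,
          Fin.sum_univ_succ]
    · rintro ⟨h1, h2⟩
      rw [span_char] at h1
      obtain ⟨ha, hb, hc⟩ := h1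
      obtain ⟨M, N⟩ := v
      simp only at ha hb hc h2 ⊢
      subst h2
      refine ⟨!![0, 0; M 1 0, 0], 0,
        !![M 0 0, 0, 0, 0; M 0 1, -M 0 0, 0, 0; M 0 2, 0, 0, 0; M 0 3, 0, 0, 0],
        by simp [Matrix.trace_fin_two], by simp, ?_, ?_⟩
      · simp [Matrix.trace, Matrix.diag, Fin.sum_univ_four, Matrix.vecHead, Matrix.vecTail]
      · refine Prod.ext ?_ (by simp)
        simp only
        ext i j
        fin_cases i <;> fin_cases j <;>
          simp_all [qhol, Matrix.mul_apply, Matrix.add_apply, Matrix.single,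
            Fin.sum_univ_four, Fin.sum_univ_two, Matrix.vecHead, Matrix.vecTail,
            Matrix.transpose_apply]
  · intro b
    constructor
    · intro h c
      have h0 := congrFun (congrFun h 0) c
      simp [n4Bracket, qhol, Matrix.mul_apply, Matrix.add_apply, Matrix.single,
        Fin.sum_univ_succ] at h0
      exact h0
    · intro h
      ext i j
      fin_cases i <;> fin_cases j <;>
        simp [n4Bracket, qhol, Matrix.mul_apply, Matrix.add_apply, Matrix.single,
          Fin.sum_univ_succ, h]
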